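/- Let φ_1, ..., φ_n be unit norm vectors in ℂ^d which form a scalable family. Then there exists a subset I ⊆ {1, ..., n} such that {φ_i}_{i∈I} is scalable and the outer products {φ_iφ_i*}_{i∈I} are linearly independent over ℝ in the space of d×d Hermitian matrices. -/

import Mathlib

/-- The outer product `x x*` of a vector `x ∈ ℂ^d` with itself:
the `d × d` matrix whose `(j,k)` entry is `x j * conj (x k)`. -/
def outer {d : ℕ} (x : EuclideanSpace ℂ (Fin d)) : Matrix (Fin d) (Fin d) ℂ :=
  Matrix.of fun j k => x j * starRingEnd ℂ (x k)

theorem aux8 {d n : ℕ} (φ : Fin n → EuclideanSpace ℂ (Fin d)) :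
    ∀ s : Finset (Fin n), ∀ w : Fin n → ℝ, (∀ i, 0 ≤ w i) →
      ∑ i ∈ s, w i • outer (φ i) = (1 : Matrix (Fin d) (Fin d) ℂ) →
      ∃ I : Finset (Fin n),
        (∃ w' : Fin n → ℝ, (∀ i, 0 ≤ w' i) ∧
            ∑ i ∈ I, w' i • outer (φ i) = (1 : Matrix (Fin d) (Fin d) ℂ)) ∧
          LinearIndependent ℝ (fun i : I => outer (φ i)) := by
  classical
  intro s
  induction s using Finset.strongInductionOn with
  | _ s ih =>
    intro w hw hsum
    by_cases hli : LinearIndependent ℝ (fun i : s => outer (φ i))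
    · exact ⟨s, ⟨w, hw, hsum⟩, hli⟩
    · obtain ⟨g, hg0, j, hj⟩ := Fintype.not_linearIndependent_iff.mp hli
      set ε : ℝ := if 0 < g j then 1 else -1 with hε
      set c : Fin n → ℝ := fun i => if h : i ∈ s then ε * g ⟨i, h⟩ else 0 with hc
      have hcj : 0 < c (j : Fin n) := by
        have : c (j : Fin n) = ε * g j := by
          simp [hc, j.2]
        rw [this, hε]
        rcases lt_trichotomy (g j) 0 with h | h | h
        · rw [if_neg (not_lt.mpr h.le)]; nlinarith
        · exact absurd h hj
        · simp [h]
      have hcsum : ∑ i ∈ s, c i • outer (φ i) = 0 := by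
        rw [← Finset.sum_attach s (fun i => c i • outer (φ i))]
        have : ∀ i : s, c (i : Fin n) • outer (φ i) = ε • (g i • outer (φ i)) := by
          intro i
          simp [hc, i.2, mul_smul]
        calc ∑ i ∈ s.attach, c (i : Fin n) • outer (φ (i : Fin n))
            = ∑ i : s, ε • (g i • outer (φ (i : Fin n))) := by
              apply Finset.sum_congr rfl; intro i _; exact this i
          _ = ε • ∑ i : s, g i • outer (φ (i : Fin n)) := by rw [Finset.smul_sum]
          _ = 0 := by rw [hg0, smul_zero]
      -- find minimizer of w i / c i over positive c
      set pos : Finset (Fin n) := s.filter (fun i => 0 < c i) with hpos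
      have hjpos : (j : Fin n) ∈ pos := Finset.mem_filter.mpr ⟨j.2, hcj⟩
      obtain ⟨i0, hi0, hmin⟩ := Finset.exists_min_image pos (fun i => w i / c i) ⟨_, hjpos⟩
      have hi0s : i0 ∈ s := (Finset.mem_filter.mp hi0).1
      have hci0 : 0 < c i0 := (Finset.mem_filter.mp hi0).2
      set t : ℝ := w i0 / c i0 with ht
      have ht0 : 0 ≤ t := div_nonneg (hw i0) hci0.le
      set w' : Fin n → ℝ := fun i => if i ∈ s then w i - t * c i else 0 with hw'
      have hw'nn : ∀ i, 0 ≤ w' i := by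
        intro i
        rw [hw']
        by_cases his : i ∈ s
        · simp only [his, if_true]
          by_cases hci : 0 < c i
          · have : t ≤ w i / c i := hmin i (Finset.mem_filter.mpr ⟨his, hci⟩)
            have h2 : t * c i ≤ w i := (le_div_iff₀ hci).mp this
            linarith
          · have h1 : t * c i ≤ 0 := mul_nonpos_of_nonneg_of_nonpos ht0 (not_lt.mp hci)
            linarith [hw i]
        · simp [his]
      have hw'i0 : w' i0 = 0 := by
        simp only [hw', hi0s, if_true, ht]
        field_simp
        ring
      have hsum' : ∑ i ∈ s.erase i0, w' i • outer (φ i) = (1 : Matrix (Fin d) (Fin d) ℂ) := by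
        have h1 : ∑ i ∈ s, w' i • outer (φ i) = (1 : Matrix (Fin d) (Fin d) ℂ) := by
          have : ∀ i ∈ s, w' i • outer (φ i) = w i • outer (φ i) - t • (c i • outer (φ i)) := by
            intro i his
            simp only [hw', his, if_true, sub_smul, mul_smul]
          rw [Finset.sum_congr rfl this, Finset.sum_sub_distrib, hsum, ← Finset.smul_sum,
            hcsum, smul_zero, sub_zero]
        rw [← Finset.sum_erase_add s _ hi0s] at h1
        rwa [hw'i0, zero_smul, add_zero] at h1
      exact ih (s.erase i0) (Finset.erase_ssubset hi0s) w' hw'nn hsum'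

/-- If a unit norm family `{φ_i}_{i=1}^n ⊆ ℂ^d` is scalable, then there is a subset
`I ⊆ {1, ..., n}` such that `{φ_i}_{i∈I}` is scalable and the outer products
`{φ_i φ_i*}_{i∈I}` are linearly independent over `ℝ`. -/
theorem stmt8 {d n : ℕ} (φ : Fin n → EuclideanSpace ℂ (Fin d))
    (hφ : ∀ i, ‖φ i‖ = 1)
    (hscal : ∃ w : Fin n → ℝ, (∀ i, 0 ≤ w i) ∧
        ∑ i, w i • outer (φ i) = (1 : Matrix (Fin d) (Fin d) ℂ)) :
    ∃ I : Finset (Fin n),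
      (∃ w : Fin n → ℝ, (∀ i, 0 ≤ w i) ∧
          ∑ i ∈ I, w i • outer (φ i) = (1 : Matrix (Fin d) (Fin d) ℂ)) ∧
        LinearIndependent ℝ (fun i : I => outer (φ i)) := by
  obtain ⟨w, hw, hsum⟩ := hscal
  exact aux8 φ Finset.univ w hw hsum
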